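/- Let B₀ ⊆ B be a two-sided ideal such that the spans of s(B₀)A and t(B₀)A equal A. Then, inside the vector space A⊗A (tensor over ℂ), the span of {s(x)a⊗b−a⊗t(x)b : x∈B, a,b∈A} equals the span of {s(x₀)a⊗b−a⊗t(x₀)b : x₀∈B₀, a,b∈A}; consequently the natural map from the B₀-balanced tensor product to the B-balanced tensor product is an isomorphism. Moreover, every linear map ε:A→B with ε(s(x)a)=xε(a) for all x∈B, a∈A satisfies ε(A) ⊆ B₀. -/
import Mathlib


open scoped TensorProduct

noncomputable section

/-- A multiplier of a non-unital complex algebra `A`: a pair `T = (L, R)` of ℂ-linear maps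
`A → A` satisfying `L (a*b) = L a * b`, `R (a*b) = a * R b` and `R a * b = a * L b`.
We write `T a := L a` and `a T := R a`. -/
structure Mult (A : Type*) [NonUnitalRing A] [Module ℂ A]
    [SMulCommClass ℂ A A] [IsScalarTower ℂ A A] where
  L : A →ₗ[ℂ] A
  R : A →ₗ[ℂ] A
  hL : ∀ a b : A, L (a * b) = L a * b
  hR : ∀ a b : A, R (a * b) = a * R b
  hC : ∀ a b : A, R a * b = a * L b

namespace Mult

variable {A : Type*} [NonUnitalRing A] [Module ℂ A] [SMulCommClass ℂ A A] [IsScalarTower ℂ A A]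

/-- Multiplication of multipliers: `(L,R)·(L′,R′) = (L∘L′, R′∘R)`. -/
instance : Mul (Mult A) :=
  ⟨fun T U =>
    { L := T.L ∘ₗ U.L
      R := U.R ∘ₗ T.R
      hL := fun a b => by simp [U.hL, T.hL]
      hR := fun a b => by simp [T.hR, U.hR]
      hC := fun a b => by simp [U.hC, T.hC] }⟩

instance : Add (Mult A) :=
  ⟨fun T U =>
    { L := T.L + U.L
      R := T.R + U.R
      hL := fun a b => by simp [T.hL, U.hL, add_mul]
      hR := fun a b => by simp [T.hR, U.hR, mul_add]
      hC := fun a b => by simp [T.hC, U.hC, add_mul, mul_add] }⟩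

instance : SMul ℂ (Mult A) :=
  ⟨fun c T =>
    { L := c • T.L
      R := c • T.R
      hL := fun a b => by simp [T.hL, smul_mul_assoc]
      hR := fun a b => by simp [T.hR, mul_smul_comm]
      hC := fun a b => by simp [T.hC, smul_mul_assoc, mul_smul_comm] }⟩

end Mult

section Maps

variable {A : Type*} [NonUnitalRing A] [Module ℂ A] [SMulCommClass ℂ A A] [IsScalarTower ℂ A A]

/-- `w ↦ w · (c ⊗ 1)` on `A ⊗ A`. -/
def rmul₁ (c : A) : A ⊗[ℂ] A →ₗ[ℂ] A ⊗[ℂ] A :=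
  TensorProduct.map (LinearMap.mulRight ℂ c) LinearMap.id

/-- `w ↦ w · (1 ⊗ c)` on `A ⊗ A`. -/
def rmul₂ (c : A) : A ⊗[ℂ] A →ₗ[ℂ] A ⊗[ℂ] A :=
  TensorProduct.map LinearMap.id (LinearMap.mulRight ℂ c)

/-- `w ↦ (c ⊗ 1) · w` on `A ⊗ A`. -/
def lmul₁ (c : A) : A ⊗[ℂ] A →ₗ[ℂ] A ⊗[ℂ] A :=
  TensorProduct.map (LinearMap.mulLeft ℂ c) LinearMap.id

/-- `w ↦ (1 ⊗ c) · w` on `A ⊗ A`. -/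
def lmul₂ (c : A) : A ⊗[ℂ] A →ₗ[ℂ] A ⊗[ℂ] A :=
  TensorProduct.map LinearMap.id (LinearMap.mulLeft ℂ c)

/-- `b ↦ a ⊗ b`. -/
def tmulL (a : A) : A →ₗ[ℂ] A ⊗[ℂ] A := TensorProduct.mk ℂ A A a

/-- `a ↦ a ⊗ b`. -/
def tmulR (b : A) : A →ₗ[ℂ] A ⊗[ℂ] A := (TensorProduct.mk ℂ A A).flip b

/-- `(x ⊗ y) ⊗ v ↦ x ⊗ (y * v)`. -/
def mulIn23 : (A ⊗[ℂ] A) ⊗[ℂ] A →ₗ[ℂ] A ⊗[ℂ] A :=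
  TensorProduct.map LinearMap.id (LinearMap.mul' ℂ A) ∘ₗ
    (TensorProduct.assoc ℂ A A A).toLinearMap

/-- `(x ⊗ y) ⊗ v ↦ x ⊗ (v * y)`. -/
def mulIn23' : (A ⊗[ℂ] A) ⊗[ℂ] A →ₗ[ℂ] A ⊗[ℂ] A :=
  TensorProduct.map LinearMap.id
      (LinearMap.mul' ℂ A ∘ₗ (TensorProduct.comm ℂ A A).toLinearMap) ∘ₗ
    (TensorProduct.assoc ℂ A A A).toLinearMap

/-- `u ⊗ (x ⊗ y) ↦ (x * u) ⊗ y`. -/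
def mulIn1 : A ⊗[ℂ] (A ⊗[ℂ] A) →ₗ[ℂ] A ⊗[ℂ] A :=
  TensorProduct.map (LinearMap.mul' ℂ A) LinearMap.id ∘ₗ
    (TensorProduct.assoc ℂ A A A).symm.toLinearMap ∘ₗ
    (TensorProduct.leftComm ℂ A A A).toLinearMap

/-- `u ⊗ (x ⊗ y) ↦ (u * x) ⊗ y`. -/
def mulIn1' : A ⊗[ℂ] (A ⊗[ℂ] A) →ₗ[ℂ] A ⊗[ℂ] A :=
  TensorProduct.map (LinearMap.mul' ℂ A ∘ₗ (TensorProduct.comm ℂ A A).toLinearMap)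
      LinearMap.id ∘ₗ
    (TensorProduct.assoc ℂ A A A).symm.toLinearMap ∘ₗ
    (TensorProduct.leftComm ℂ A A A).toLinearMap

end Maps

/-- The basic data for a left multiplier bialgebroid: non-unital complex algebras `A`, `B`,
an algebra homomorphism `s : B → M(A)`, an algebra anti-homomorphism `t : B → M(A)` with
commuting images; `A` is idempotent and non-degenerate, `s`, `t` are faithful and the spans
of `s(B)A` and `t(B)A` equal `A`. -/
structure BaseData (A B : Type*) [NonUnitalRing A] [Module ℂ A] [SMulCommClass ℂ A A]
    [IsScalarTower ℂ A A] [NonUnitalRing B] [Module ℂ B] [SMulCommClass ℂ B B]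
    [IsScalarTower ℂ B B] where
  s : B → Mult A
  t : B → Mult A
  s_add : ∀ x y : B, s (x + y) = s x + s y
  s_smul : ∀ (c : ℂ) (x : B), s (c • x) = c • s x
  s_mul : ∀ x y : B, s (x * y) = s x * s y
  t_add : ∀ x y : B, t (x + y) = t x + t y
  t_smul : ∀ (c : ℂ) (x : B), t (c • x) = c • t x
  t_mul : ∀ x y : B, t (x * y) = t y * t x
  st_comm : ∀ x y : B, s x * t y = t y * s x
  A_nd : ∀ a : A, (∀ b : A, a * b = 0) → a = 0
  A_idem : Submodule.span ℂ {z : A | ∃ a b : A, z = a * b} = ⊤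
  s_faithful : ∀ x : B, (∀ a : A, (s x).L a = 0) → x = 0
  t_faithful : ∀ x : B, (∀ a : A, (t x).L a = 0) → x = 0
  s_span : Submodule.span ℂ {z : A | ∃ (x : B) (a : A), z = (s x).L a} = ⊤
  t_span : Submodule.span ℂ {z : A | ∃ (x : B) (a : A), z = (t x).L a} = ⊤

section LeftBgd

variable {A B : Type*}
  [NonUnitalRing A] [Module ℂ A] [SMulCommClass ℂ A A] [IsScalarTower ℂ A A]
  [NonUnitalRing B] [Module ℂ B] [SMulCommClass ℂ B B] [IsScalarTower ℂ B B]

/-- The subspace of `A ⊗ A` by which one quotients to obtain `A ⊗̄ A`: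
the span of all `s(x)a ⊗ b − a ⊗ t(x)b`. -/
def BaseData.relB (D : BaseData A B) : Submodule ℂ (A ⊗[ℂ] A) :=
  Submodule.span ℂ
    {z : A ⊗[ℂ] A | ∃ (x : B) (a b : A), z = (D.s x).L a ⊗ₜ[ℂ] b - a ⊗ₜ[ℂ] (D.t x).L b}

/-- Non-degeneracy of `A ⊗̄ A` as a right module over `A ⊗ 1` and over `1 ⊗ A`,
formulated via representatives. -/
def condA3 (D : BaseData A B) : Prop :=
  (∀ u : A ⊗[ℂ] A, (∀ c : A, rmul₁ c u ∈ D.relB) → u ∈ D.relB) ∧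
  (∀ u : A ⊗[ℂ] A, (∀ c : A, rmul₂ c u ∈ D.relB) → u ∈ D.relB)

/-- (L1): `T̃λ(s(x)a⊗b) = T̃λ(a⊗b)(1⊗t(x))` and `T̃ρ(a⊗t(y)b) = T̃ρ(a⊗b)(s(y)⊗1)`. -/
def condL1 (D : BaseData A B) (Tl Tr : A ⊗[ℂ] A →ₗ[ℂ] A ⊗[ℂ] A) : Prop :=
  (∀ (x : B) (a b : A),
      Tl ((D.s x).L a ⊗ₜ[ℂ] b) -
        TensorProduct.map LinearMap.id (D.t x).R (Tl (a ⊗ₜ[ℂ] b)) ∈ D.relB) ∧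
  (∀ (y : B) (a b : A),
      Tr (a ⊗ₜ[ℂ] (D.t y).L b) -
        TensorProduct.map (D.s y).R LinearMap.id (Tr (a ⊗ₜ[ℂ] b)) ∈ D.relB)

/-- (L2λ): `T̃λ(a ⊗ s(x)t(y)b s(x′)t(y′)) = (t(y)⊗s(x))·T̃λ(t(y′)a⊗b)·(1⊗s(x′))`. -/
def condL2lam (D : BaseData A B) (Tl : A ⊗[ℂ] A →ₗ[ℂ] A ⊗[ℂ] A) : Prop :=
  ∀ (a b : A) (x x' y y' : B),
    Tl (a ⊗ₜ[ℂ] ((D.s x).L ((D.t y).L ((D.t y').R ((D.s x').R b))))) -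
      TensorProduct.map (D.t y).L (D.s x).L
        (TensorProduct.map LinearMap.id (D.s x').R (Tl ((D.t y').L a ⊗ₜ[ℂ] b))) ∈ D.relB

/-- (L2ρ): `T̃ρ(s(x)t(y)a s(x′)t(y′) ⊗ b) = (t(y)⊗s(x))·T̃ρ(a⊗s(x′)b)·(t(y′)⊗1)`. -/
def condL2rho (D : BaseData A B) (Tr : A ⊗[ℂ] A →ₗ[ℂ] A ⊗[ℂ] A) : Prop :=
  ∀ (a b : A) (x x' y y' : B),
    Tr (((D.s x).L ((D.t y).L ((D.t y').R ((D.s x').R a)))) ⊗ₜ[ℂ] b) -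
      TensorProduct.map (D.t y).L (D.s x).L
        (TensorProduct.map (D.t y').R LinearMap.id (Tr (a ⊗ₜ[ℂ] (D.s x').L b))) ∈ D.relB

/-- (L3): `T̃λ(a⊗b)·(1⊗c) = T̃ρ(b⊗c)·(a⊗1)`. -/
def condL3 (D : BaseData A B) (Tl Tr : A ⊗[ℂ] A →ₗ[ℂ] A ⊗[ℂ] A) : Prop :=
  ∀ a b c : A, rmul₂ c (Tl (a ⊗ₜ[ℂ] b)) - rmul₁ a (Tr (b ⊗ₜ[ℂ] c)) ∈ D.relB

/-- (L4): `T̃λ(ba⊗c) = T̃λ(b⊗c)·(a⊗1)` and `T̃ρ(a⊗bc) = T̃ρ(a⊗b)·(1⊗c)`. -/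
def condL4 (D : BaseData A B) (Tl Tr : A ⊗[ℂ] A →ₗ[ℂ] A ⊗[ℂ] A) : Prop :=
  (∀ a b c : A, Tl ((b * a) ⊗ₜ[ℂ] c) - rmul₁ a (Tl (b ⊗ₜ[ℂ] c)) ∈ D.relB) ∧
  (∀ a b c : A, Tr (a ⊗ₜ[ℂ] (b * c)) - rmul₂ c (Tr (a ⊗ₜ[ℂ] b)) ∈ D.relB)

/-- (L5λ): whenever `u = Σⱼ uⱼ⊗vⱼ` represents `T̃λ(a⊗c)`, one has
`T̃λ(a ⊗ bc) = Σⱼ T̃λ(uⱼ⊗b)·(1⊗vⱼ)`. -/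
def condL5lam (D : BaseData A B) (Tl : A ⊗[ℂ] A →ₗ[ℂ] A ⊗[ℂ] A) : Prop :=
  ∀ (a b c : A) (u : A ⊗[ℂ] A), u - Tl (a ⊗ₜ[ℂ] c) ∈ D.relB →
    Tl (a ⊗ₜ[ℂ] (b * c)) -
      mulIn23 (TensorProduct.map (Tl ∘ₗ tmulR b) LinearMap.id u) ∈ D.relB

/-- (L5ρ): whenever `u = Σⱼ uⱼ⊗vⱼ` represents `T̃ρ(b⊗c)`, one has
`T̃ρ(ab ⊗ c) = Σⱼ T̃ρ(a⊗vⱼ)·(uⱼ⊗1)`. -/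
def condL5rho (D : BaseData A B) (Tr : A ⊗[ℂ] A →ₗ[ℂ] A ⊗[ℂ] A) : Prop :=
  ∀ (a b c : A) (u : A ⊗[ℂ] A), u - Tr (b ⊗ₜ[ℂ] c) ∈ D.relB →
    Tr ((a * b) ⊗ₜ[ℂ] c) -
      mulIn1 (TensorProduct.map LinearMap.id (Tr ∘ₗ tmulL a) u) ∈ D.relB

/-- The subspace of `A ⊗ A ⊗ A` by which one quotients to obtain the two-sided balanced
triple tensor product: the span of all `s(x)a⊗b⊗c − a⊗t(x)b⊗c` and
`a⊗s(x)b⊗c − a⊗b⊗t(x)c`. -/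
def BaseData.span₃ (D : BaseData A B) : Submodule ℂ (A ⊗[ℂ] (A ⊗[ℂ] A)) :=
  Submodule.span ℂ
    ({w : A ⊗[ℂ] (A ⊗[ℂ] A) | ∃ (x : B) (a b c : A),
        w = (D.s x).L a ⊗ₜ[ℂ] (b ⊗ₜ[ℂ] c) - a ⊗ₜ[ℂ] ((D.t x).L b ⊗ₜ[ℂ] c)} ∪
     {w : A ⊗[ℂ] (A ⊗[ℂ] A) | ∃ (x : B) (a b c : A),
        w = a ⊗ₜ[ℂ] ((D.s x).L b ⊗ₜ[ℂ] c) - a ⊗ₜ[ℂ] (b ⊗ₜ[ℂ] (D.t x).L c)})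

/-- (L6): mixed coassociativity; whenever `u` represents `T̃ρ(b⊗c)` and `p` represents
`T̃λ(a⊗b)`, the elements `Σⱼ T̃λ(a⊗uⱼ)⊗vⱼ` and `Σₖ pₖ⊗T̃ρ(qₖ⊗c)` agree in the
balanced triple tensor product. -/
def condL6 (D : BaseData A B) (Tl Tr : A ⊗[ℂ] A →ₗ[ℂ] A ⊗[ℂ] A) : Prop :=
  ∀ (a b c : A) (u p : A ⊗[ℂ] A), u - Tr (b ⊗ₜ[ℂ] c) ∈ D.relB →
    p - Tl (a ⊗ₜ[ℂ] b) ∈ D.relB →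
    (TensorProduct.assoc ℂ A A A)
        (TensorProduct.map (Tl ∘ₗ tmulL a) LinearMap.id u) -
      TensorProduct.map LinearMap.id (Tr ∘ₗ tmulR c) p ∈ D.span₃

/-- A left multiplier bialgebroid, presented by its canonical maps. -/
def IsLeftBialgebroid (D : BaseData A B) (Tl Tr : A ⊗[ℂ] A →ₗ[ℂ] A ⊗[ℂ] A) : Prop :=
  condA3 D ∧ condL1 D Tl Tr ∧ condL2lam D Tl ∧ condL2rho D Tr ∧ condL3 D Tl Tr ∧
    condL4 D Tl Tr ∧ condL5lam D Tl ∧ condL5rho D Tr ∧ condL6 D Tl Tr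

/-- A left counit for a left multiplier bialgebroid. -/
def IsLeftCounit (D : BaseData A B) (Tl Tr : A ⊗[ℂ] A →ₗ[ℂ] A ⊗[ℂ] A)
    (ε : A →ₗ[ℂ] B) : Prop :=
  (∀ (x : B) (a : A), ε ((D.s x).L a) = x * ε a) ∧
  (∀ (y : B) (a : A), ε ((D.t y).L a) = ε a * y) ∧
  (∀ (a b : A) (n : ℕ) (uu vv : Fin n → A),
      (∑ j, uu j ⊗ₜ[ℂ] vv j) - Tr (a ⊗ₜ[ℂ] b) ∈ D.relB →
      ∑ j, (D.t (ε (uu j))).L (vv j) = a * b) ∧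
  (∀ (a b : A) (n : ℕ) (uu vv : Fin n → A),
      (∑ j, uu j ⊗ₜ[ℂ] vv j) - Tl (a ⊗ₜ[ℂ] b) ∈ D.relB →
      ∑ j, (D.s (ε (vv j))).L (uu j) = a * b)

/-- The domain relation for the canonical map `Tλ`: the span of all
`t(x)a ⊗ b − a ⊗ b·t(x)`. -/
def relLam (D : BaseData A B) : Submodule ℂ (A ⊗[ℂ] A) :=
  Submodule.span ℂ
    {z : A ⊗[ℂ] A | ∃ (x : B) (a b : A), z = (D.t x).L a ⊗ₜ[ℂ] b - a ⊗ₜ[ℂ] (D.t x).R b}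

/-- The domain relation for the canonical map `Tρ`: the span of all
`a·s(x) ⊗ b − a ⊗ s(x)b`. -/
def relRho (D : BaseData A B) : Submodule ℂ (A ⊗[ℂ] A) :=
  Submodule.span ℂ
    {z : A ⊗[ℂ] A | ∃ (x : B) (a b : A), z = (D.s x).R a ⊗ₜ[ℂ] b - a ⊗ₜ[ℂ] (D.s x).L b}

/-- The left ideal `Iˢ ⊆ B`. -/
def IdlS (D : BaseData A B) : Submodule ℂ B :=
  Submodule.span ℂ
    {z : B | ∃ φ : A →ₗ[ℂ] B, (∀ (x : B) (a : A), φ ((D.s x).L a) = x * φ a) ∧ ∃ a, z = φ a}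

/-- The right ideal `Iᵗ ⊆ B`. -/
def IdlT (D : BaseData A B) : Submodule ℂ B :=
  Submodule.span ℂ
    {z : B | ∃ ψ : A →ₗ[ℂ] B, (∀ (x : B) (a : A), ψ ((D.t x).L a) = ψ a * x) ∧ ∃ a, z = ψ a}

/-- The elements witnessing left-fullness. -/
def leftFullSet (D : BaseData A B) (Tr : A ⊗[ℂ] A →ₗ[ℂ] A ⊗[ℂ] A) : Set A :=
  {z : A | ∃ ψ : A →ₗ[ℂ] B, (∀ (x : B) (a : A), ψ ((D.t x).L a) = ψ a * x) ∧
    ∃ (a b : A) (n : ℕ) (uu vv : Fin n → A),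
      (∑ j, uu j ⊗ₜ[ℂ] vv j) - Tr (a ⊗ₜ[ℂ] b) ∈ D.relB ∧
      z = ∑ j, (D.s (ψ (vv j))).L (uu j)}

/-- The elements witnessing right-fullness. -/
def rightFullSet (D : BaseData A B) (Tl : A ⊗[ℂ] A →ₗ[ℂ] A ⊗[ℂ] A) : Set A :=
  {z : A | ∃ φ : A →ₗ[ℂ] B, (∀ (x : B) (a : A), φ ((D.s x).L a) = x * φ a) ∧
    ∃ (a b : A) (n : ℕ) (uu vv : Fin n → A),
      (∑ j, uu j ⊗ₜ[ℂ] vv j) - Tl (a ⊗ₜ[ℂ] b) ∈ D.relB ∧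
      z = ∑ j, (D.t (φ (uu j))).L (vv j)}

/-- restriction to an ideal `B₀ ⊆ B` with `s(B₀)A = A = t(B₀)A` does not
change the balanced tensor product, and every `s`-compatible map `ε` takes values
in `B₀`. -/
theorem stmt9 (D : BaseData A B) (B₀ : Submodule ℂ B)
    (hIdeal : ∀ x : B, ∀ b ∈ B₀, x * b ∈ B₀ ∧ b * x ∈ B₀)
    (hs : Submodule.span ℂ {z : A | ∃ (x : B) (a : A), x ∈ B₀ ∧ z = (D.s x).L a} = ⊤)
    (ht : Submodule.span ℂ {z : A | ∃ (x : B) (a : A), x ∈ B₀ ∧ z = (D.t x).L a} = ⊤) :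
    (Submodule.span ℂ {z : A ⊗[ℂ] A | ∃ (x : B) (a b : A),
        z = (D.s x).L a ⊗ₜ[ℂ] b - a ⊗ₜ[ℂ] (D.t x).L b} =
      Submodule.span ℂ {z : A ⊗[ℂ] A | ∃ (x : B) (a b : A),
        x ∈ B₀ ∧ z = (D.s x).L a ⊗ₜ[ℂ] b - a ⊗ₜ[ℂ] (D.t x).L b}) ∧
    (∀ ε : A →ₗ[ℂ] B, (∀ (x : B) (a : A), ε ((D.s x).L a) = x * ε a) →
      LinearMap.range ε ≤ B₀) := by
  set S₀ : Submodule ℂ (A ⊗[ℂ] A) := Submodule.span ℂ {z : A ⊗[ℂ] A | ∃ (x : B) (a b : A),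
        x ∈ B₀ ∧ z = (D.s x).L a ⊗ₜ[ℂ] b - a ⊗ₜ[ℂ] (D.t x).L b} with hS₀
  constructor
  · apply le_antisymm
    · rw [Submodule.span_le]
      rintro z ⟨x, a, b, rfl⟩
      -- linear map in b
      set f : A →ₗ[ℂ] A ⊗[ℂ] A :=
        (TensorProduct.mk ℂ A A ((D.s x).L a)) - (TensorProduct.mk ℂ A A a) ∘ₗ (D.t x).L with hf
      have key : (⊤ : Submodule ℂ A) ≤ Submodule.comap f S₀ := by
        rw [← ht, Submodule.span_le]
        rintro w ⟨x₀, b', hx₀, rfl⟩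
        have g2 : (D.s (x₀ * x)).L a ⊗ₜ[ℂ] b' - a ⊗ₜ[ℂ] (D.t (x₀ * x)).L b' ∈ S₀ :=
          Submodule.subset_span ⟨x₀ * x, a, b', (hIdeal x x₀ hx₀).2, rfl⟩
        have g1 : (D.s x₀).L ((D.s x).L a) ⊗ₜ[ℂ] b' -
            (D.s x).L a ⊗ₜ[ℂ] (D.t x₀).L b' ∈ S₀ :=
          Submodule.subset_span ⟨x₀, (D.s x).L a, b', hx₀, rfl⟩
        have e1 : (D.s (x₀ * x)).L a = (D.s x₀).L ((D.s x).L a) := by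
          rw [D.s_mul]; rfl
        have e2 : (D.t (x₀ * x)).L b' = (D.t x).L ((D.t x₀).L b') := by
          rw [D.t_mul]; rfl
        have : f ((D.t x₀).L b') =
            ((D.s (x₀ * x)).L a ⊗ₜ[ℂ] b' - a ⊗ₜ[ℂ] (D.t (x₀ * x)).L b') -
            ((D.s x₀).L ((D.s x).L a) ⊗ₜ[ℂ] b' - (D.s x).L a ⊗ₜ[ℂ] (D.t x₀).L b') := by
          simp only [hf, LinearMap.sub_apply, LinearMap.comp_apply, TensorProduct.mk_apply,
            e1, e2]
          abel
        simpa [Submodule.mem_comap, this] using sub_mem g2 g1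
      have hb : b ∈ Submodule.comap f S₀ := key trivial
      simpa [hf] using hb
    · exact Submodule.span_mono (fun z ⟨x, a, b, _, h⟩ => ⟨x, a, b, h⟩)
  · intro ε hε
    rintro _ ⟨a, rfl⟩
    have key : (⊤ : Submodule ℂ A) ≤ Submodule.comap ε B₀ := by
      rw [← hs, Submodule.span_le]
      rintro w ⟨x₀, a', hx₀, rfl⟩
      simpa [Submodule.mem_comap, hε x₀ a'] using (hIdeal (ε a') x₀ hx₀).2
    exact key trivial

end LeftBgd
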